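/- Let p ≥ 5 be a prime and let q ≥ 2 be an even integer. Then there is no integer j with 0 ≤ j ≤ pq satisfying j² − (pq+1)·j + p + pq + 1 = 0. -/
import Mathlib


/-- For `p ≥ 5` prime and `q ≥ 2` even, the quadratic
`j² - (pq+1)·j + p + pq + 1` has no integer root in `[0, pq]`. -/
theorem no_root_k1_neg_case_b (p q : ℤ) (hp : Prime p) (hp5 : 5 ≤ p)
    (hq : 2 ≤ q) (hqeven : Even q) :
    ¬ ∃ j : ℤ, 0 ≤ j ∧ j ≤ p * q ∧
      j ^ 2 - (p * q + 1) * j + p + p * q + 1 = 0 := by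
  rintro ⟨j, hj0, hjpq, heq⟩
  have hpq : 2 * p ≤ p * q := by nlinarith
  rcases lt_or_ge j 2 with h2 | h2
  · interval_cases j <;> nlinarith
  · rcases lt_or_ge j (p * q - 1) with h3 | h3
    · have hprod : (j - 2) * (j - (p * q - 1)) ≤ 0 :=
        mul_nonpos_of_nonneg_of_nonpos (by linarith) (by linarith)
      nlinarith
    · have : j = p * q - 1 ∨ j = p * q := by omega
      rcases this with rfl | rfl <;> nlinarith
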